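/- If a strategy profile σ survives iterated deletion of minimax dominated strategies (σ ∈ NSD^∞(Γ)), then σ is minimax rationalizable: the sets Z_i = NSD_i^∞(Γ) witness minimax rationalizability of σ. -/

import Mathlib

open Function

section
variable {ι : Type*} [DecidableEq ι] {S : ι → Type*}

noncomputable def minv (u : ι → (∀ j, S j) → ℝ) (i : ι) (T : Set (∀ j, S j)) (σ : S i) : ℝ :=
  sInf ((fun τ => u i (Function.update τ i σ)) '' T)

noncomputable def maxv (u : ι → (∀ j, S j) → ℝ) (i : ι) (T : Set (∀ j, S j)) (σ : S i) : ℝ :=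
  sSup ((fun τ => u i (Function.update τ i σ)) '' T)

/-- `σ'` minimax dominates `σ` for player `i` w.r.t. opponent profile set `T`. -/
def MMDomBy (u : ι → (∀ j, S j) → ℝ) (i : ι) (T : Set (∀ j, S j)) (σ σ' : S i) : Prop :=
  minv u i T σ' > maxv u i T σ

def MMDom (u : ι → (∀ j, S j) → ℝ) (i : ι) (T : Set (∀ j, S j)) (σ : S i) : Prop :=
  ∃ σ' : S i, MMDomBy u i T σ σ'

/-- Opponent profiles of player `i` compatible with the product set `Z`. -/
def Opp (Z : ∀ j, Set (S j)) (i : ι) : Set (∀ j, S j) := {τ | ∀ j, j ≠ i → τ j ∈ Z j}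

/-- Iterated deletion of minimax dominated strategies. -/
noncomputable def NSD (u : ι → (∀ j, S j) → ℝ) : ℕ → ∀ i, Set (S i)
  | 0, _ => Set.univ
  | (k+1), i => {σ ∈ NSD u k i | ¬ MMDom u i (Opp (NSD u k) i) σ}


/-- `σ` is minimax rationalizable. -/
def MMRat {ι : Type*} [DecidableEq ι] {S : ι → Type*}
    (u : ι → (∀ j, S j) → ℝ) (σ : ∀ j, S j) : Prop :=
  ∃ Z : ∀ i, Set (S i), (∀ i, (Z i).Nonempty) ∧ (∀ i, σ i ∈ Z i) ∧
    ∀ i, ∀ σ' ∈ Z i, ∀ σ'' : S i, maxv u i (Opp Z i) σ' ≥ minv u i (Opp Z i) σ''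
variable {ι : Type*} [Fintype ι] [DecidableEq ι] {S : ι → Type*}
  [∀ i, Fintype (S i)] [∀ i, Nonempty (S i)]

private lemma img_fin (u : ι → (∀ j, S j) → ℝ) (i : ι) (T : Set (∀ j, S j)) (σ' : S i) :
    ((fun τ => u i (Function.update τ i σ')) '' T).Finite := Set.toFinite _

private lemma minv_le_maxv (u : ι → (∀ j, S j) → ℝ) (i : ι) {T : Set (∀ j, S j)}
    (hT : T.Nonempty) (σ' : S i) : minv u i T σ' ≤ maxv u i T σ' :=
  csInf_le_csSup (hT.image _) (img_fin u i T σ').bddBelow (img_fin u i T σ').bddAbove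

private lemma minv_mono (u : ι → (∀ j, S j) → ℝ) (i : ι) {T T' : Set (∀ j, S j)}
    (hT : T.Nonempty) (hsub : T ⊆ T') (σ' : S i) : minv u i T' σ' ≤ minv u i T σ' :=
  csInf_le_csInf (img_fin u i T' σ').bddBelow (hT.image _) (Set.image_mono hsub)

private lemma maxv_mono (u : ι → (∀ j, S j) → ℝ) (i : ι) {T T' : Set (∀ j, S j)}
    (hT : T.Nonempty) (hsub : T ⊆ T') (σ' : S i) : maxv u i T σ' ≤ maxv u i T' σ' :=
  csSup_le_csSup (img_fin u i T' σ').bddAbove (hT.image _) (Set.image_mono hsub)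

private lemma NSD_succ_subset (u : ι → (∀ j, S j) → ℝ) (k : ℕ) (i : ι) :
    NSD u (k+1) i ⊆ NSD u k i := fun _ hσ => hσ.1

private lemma NSD_antitone (u : ι → (∀ j, S j) → ℝ) (i : ι) :
    Antitone (fun k => NSD u k i) :=
  antitone_nat_of_succ_le fun k => NSD_succ_subset u k i

private lemma Opp_mono {Z Z' : ∀ j, Set (S j)} (hsub : ∀ j, Z j ⊆ Z' j) (i : ι) :
    Opp Z i ⊆ Opp Z' i := fun _ hτ j hj => hsub j (hτ j hj)

private lemma Opp_nonempty {Z : ∀ j, Set (S j)} (hne : ∀ j, (Z j).Nonempty) (i : ι) :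
    (Opp Z i).Nonempty := by
  choose f hf using hne
  exact ⟨f, fun j _ => hf j⟩

private lemma NSD_nonempty (u : ι → (∀ j, S j) → ℝ) : ∀ k i, (NSD u k i).Nonempty := by
  intro k
  induction k with
  | zero => intro i; exact ⟨Classical.arbitrary _, trivial⟩
  | succ k ih =>
    intro i
    have hOppk : (Opp (NSD u k) i).Nonempty := Opp_nonempty ih i
    obtain ⟨σs, hσs⟩ := Finite.exists_max (minv u i (Opp (NSD u k) i))
    have hundom : ∀ m, m ≤ k → ¬ MMDom u i (Opp (NSD u m) i) σs := by
      rintro m hm ⟨σ', hd⟩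
      have hsub : Opp (NSD u k) i ⊆ Opp (NSD u m) i :=
        Opp_mono (fun j => NSD_antitone u j hm) i
      have h1 : minv u i (Opp (NSD u m) i) σ' ≤ minv u i (Opp (NSD u k) i) σ' :=
        minv_mono u i hOppk hsub σ'
      have h2 : maxv u i (Opp (NSD u k) i) σs ≤ maxv u i (Opp (NSD u m) i) σs :=
        maxv_mono u i hOppk hsub σs
      exact absurd hd (not_lt.2 (h1.trans ((hσs σ').trans
        ((minv_le_maxv u i hOppk σs).trans h2))))
    have hmem : ∀ m, m ≤ k + 1 → σs ∈ NSD u m i := by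
      intro m
      induction m with
      | zero => intro _; trivial
      | succ m ihm =>
        intro hm
        exact ⟨ihm (Nat.le_of_succ_le hm), hundom m (Nat.succ_le_succ_iff.mp hm)⟩
    exact ⟨σs, hmem (k+1) le_rfl⟩

private lemma NSD_stab (u : ι → (∀ j, S j) → ℝ) :
    ∃ K, ∀ j, NSD u K j = ⋂ k, NSD u k j := by
  have hstep : ∃ K, ∀ j, NSD u (K+1) j = NSD u K j := by
    by_contra hc
    push_neg at hc
    have hlt : ∀ k, (∑ j, (NSD u (k+1) j).ncard) < ∑ j, (NSD u k j).ncard := by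
      intro k
      obtain ⟨j0, hj0⟩ := hc k
      refine Finset.sum_lt_sum
        (fun j _ => Set.ncard_le_ncard (NSD_succ_subset u k j) (Set.toFinite _))
        ⟨j0, Finset.mem_univ _, ?_⟩
      exact Set.ncard_lt_ncard ((NSD_succ_subset u k j0).ssubset_of_ne hj0) (Set.toFinite _)
    have hle : ∀ k, (∑ j, (NSD u k j).ncard) + k ≤ ∑ j, (NSD u 0 j).ncard := by
      intro k
      induction k with
      | zero => simp
      | succ k ihk => have := hlt k; omega
    have := hle ((∑ j, (NSD u 0 j).ncard) + 1)
    omega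
  obtain ⟨K, hK⟩ := hstep
  have hconst : ∀ m, K ≤ m → ∀ j, NSD u m j = NSD u K j := by
    intro m hm
    induction m, hm using Nat.le_induction with
    | base => intro j; rfl
    | succ m hm ihm =>
      intro j
      have hNm : NSD u m = NSD u K := funext ihm
      calc NSD u (m+1) j = {σ' ∈ NSD u m j | ¬ MMDom u j (Opp (NSD u m) j) σ'} := rfl
        _ = {σ' ∈ NSD u K j | ¬ MMDom u j (Opp (NSD u K) j) σ'} := by rw [hNm]
        _ = NSD u (K+1) j := rfl
        _ = NSD u K j := hK j
  refine ⟨K, fun j => subset_antisymm (Set.subset_iInter fun m => ?_) (Set.iInter_subset _ K)⟩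
  rcases le_or_gt K m with hm | hm
  · exact (hconst m hm j).ge
  · exact NSD_antitone u j hm.le

theorem nsd_inf_minimax_rationalizable (u : ι → (∀ j, S j) → ℝ) (σ : ∀ j, S j)
    (h : ∀ i, σ i ∈ ⋂ k, NSD u k i) :
    (∀ i, (⋂ k, NSD u k i : Set (S i)).Nonempty) ∧
    (∀ i, ∀ σ' ∈ (⋂ k, NSD u k i : Set (S i)), ∀ σ'' : S i,
      maxv u i (Opp (fun j => ⋂ k, NSD u k j) i) σ' ≥
        minv u i (Opp (fun j => ⋂ k, NSD u k j) i) σ'') ∧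
    MMRat u σ := by
  obtain ⟨K, hK⟩ := NSD_stab u
  have hfun : (fun j => ⋂ k, NSD u k j) = NSD u K := funext fun j => (hK j).symm
  have hne : ∀ i, (⋂ k, NSD u k i : Set (S i)).Nonempty := by
    intro i; rw [← hK i]; exact NSD_nonempty u K i
  have key : ∀ i, ∀ σ' ∈ (⋂ k, NSD u k i : Set (S i)), ∀ σ'' : S i,
      maxv u i (Opp (fun j => ⋂ k, NSD u k j) i) σ' ≥
        minv u i (Opp (fun j => ⋂ k, NSD u k j) i) σ'' := by
    intro i σ' hσ' σ''
    rw [hfun]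
    have hmem : σ' ∈ NSD u (K+1) i := Set.mem_iInter.mp hσ' (K+1)
    by_contra hlt
    exact hmem.2 ⟨σ'', lt_of_not_ge hlt⟩
  exact ⟨hne, key, ⟨fun j => ⋂ k, NSD u k j, hne, h, key⟩⟩

end
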